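/- Let C be a clutter over ground set V, and suppose C has a 1/4-integral fractional packing y of value at least 2 (i.e., every entry of y is a multiple of 1/4). Then there exist at most five members of C with no common element. -/
import Mathlib


/-- If a clutter `C` has a `1/4`-integral fractional packing of value at least 2,
then there exist at most five members of `C` with no common element. -/
theorem stmt_0 {V : Type*} [Fintype V] [DecidableEq V]
    (C : Finset (Finset V))
    (hclutter : ∀ A ∈ C, ∀ B ∈ C, A ⊆ B → A = B)
    (y : Finset V → ℚ)
    (hsupp : ∀ A, A ∉ C → y A = 0)
    (hnonneg : ∀ A, 0 ≤ y A)
    (hquarter : ∀ A, ∃ z : ℤ, y A = z / 4)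
    (hpack : ∀ v : V, ∑ A ∈ C.filter (fun A => v ∈ A), y A ≤ 1)
    (hvalue : 2 ≤ ∑ A ∈ C, y A) :
    ∃ S ⊆ C, S.card ≤ 5 ∧ ¬ ∃ v : V, ∀ A ∈ S, v ∈ A := by
  classical
  set T := C.filter (fun A => 0 < y A) with hT
  have hTsub : T ⊆ C := Finset.filter_subset _ _
  have hquarterpos : ∀ A ∈ T, (1:ℚ)/4 ≤ y A := by
    intro A hA
    have hpos : 0 < y A := (Finset.mem_filter.mp hA).2
    obtain ⟨z, hz⟩ := hquarter A
    have hz1 : (1:ℤ) ≤ z := by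
      by_contra h
      push_neg at h
      have hz0 : z ≤ 0 := by omega
      have : (z:ℚ) ≤ 0 := by exact_mod_cast hz0
      have : y A ≤ 0 := by rw [hz]; linarith
      linarith
    have : (1:ℚ) ≤ (z:ℚ) := by exact_mod_cast hz1
    rw [hz]; linarith
  have hsumT : ∑ A ∈ C, y A = ∑ A ∈ T, y A := by
    symm
    apply Finset.sum_subset hTsub
    intro A hA hAT
    by_contra h
    have : 0 < y A := lt_of_le_of_ne (hnonneg A) (Ne.symm h)
    exact hAT (Finset.mem_filter.mpr ⟨hA, this⟩)
  by_cases hcard : T.card ≤ 5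
  · refine ⟨T, hTsub, hcard, ?_⟩
    rintro ⟨v, hv⟩
    have h1 : ∑ A ∈ T, y A ≤ ∑ A ∈ C.filter (fun A => v ∈ A), y A := by
      apply Finset.sum_le_sum_of_subset_of_nonneg
      · intro A hA
        exact Finset.mem_filter.mpr ⟨hTsub hA, hv A hA⟩
      · intro A _ _; exact hnonneg A
    have := hpack v
    rw [hsumT] at hvalue
    linarith
  · push_neg at hcard
    obtain ⟨S, hST, hScard⟩ := Finset.exists_subset_card_eq (le_of_lt hcard)
    refine ⟨S, hST.trans hTsub, by omega, ?_⟩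
    rintro ⟨v, hv⟩
    have h1 : (5:ℚ)/4 ≤ ∑ A ∈ S, y A := by
      calc (5:ℚ)/4 = ∑ _A ∈ S, (1:ℚ)/4 := by
            rw [Finset.sum_const, hScard]; norm_num
        _ ≤ ∑ A ∈ S, y A := Finset.sum_le_sum (fun A hA => hquarterpos A (hST hA))
    have h2 : ∑ A ∈ S, y A ≤ ∑ A ∈ C.filter (fun A => v ∈ A), y A := by
      apply Finset.sum_le_sum_of_subset_of_nonneg
      · intro A hA
        exact Finset.mem_filter.mpr ⟨hTsub (hST hA), hv A hA⟩
      · intro A _ _; exact hnonneg A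
    have := hpack v
    linarith
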